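/- Let H be a k-uniform hypergraph on a finite vertex set. Then the weak independence number α(H) equals s if and only if H contains an augmented independent set of order s but contains no augmented independent set of any order greater than s. -/

import Mathlib

open Finset

set_option linter.unusedSectionVars false

/-- A set `W` is weakly independent if no edge is fully contained in `W`. -/
def WeakIndep {V : Type*} (E : Finset (Finset V)) (W : Finset V) : Prop :=
  ∀ e ∈ E, ¬ e ⊆ W

/-- The weak independence number: the largest size of a weakly independent set. -/
noncomputable def weakIndepNum {V : Type*} (E : Finset (Finset V)) : ℕ :=
  sSup {m | ∃ W : Finset V, WeakIndep E W ∧ W.card = m}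

/-- `S` is an augmented independent set of order `s`. -/
def AugIndep {V : Type*} [DecidableEq V] (E : Finset (Finset V)) (s : ℕ) (S : Finset V) : Prop :=
  ∃ r : ℕ, S.card = s + r ∧
    (E.filter (fun e => e ⊆ S)).card = r ∧
    (∀ e ∈ E, ∀ f ∈ E, e ⊆ S → f ⊆ S → e ≠ f → Disjoint e f) ∧
    ∀ v ∉ S, 2 ≤ (E.filter (fun e => v ∈ e ∧ e ⊆ insert v S)).card

section Aux

variable {V : Type*} [Fintype V] [DecidableEq V]

lemma bddAbove_weakSet (E : Finset (Finset V)) :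
    BddAbove {m | ∃ W : Finset V, WeakIndep E W ∧ W.card = m} := by
  refine ⟨Fintype.card V, ?_⟩
  rintro m ⟨W, -, rfl⟩
  exact Finset.card_le_univ W

lemma le_weakIndepNum {E : Finset (Finset V)} {W : Finset V} (h : WeakIndep E W) :
    W.card ≤ weakIndepNum E :=
  le_csSup (bddAbove_weakSet E) ⟨W, h, rfl⟩

lemma exists_max_weak (E : Finset (Finset V)) {k : ℕ} (hk : 2 ≤ k)
    (hunif : ∀ e ∈ E, e.card = k) :
    ∃ W : Finset V, WeakIndep E W ∧ W.card = weakIndepNum E := by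
  have h0 : (0 : ℕ) ∈ {m | ∃ W : Finset V, WeakIndep E W ∧ W.card = m} := by
    refine ⟨∅, ?_, Finset.card_empty⟩
    intro e he hsub
    have h1 := hunif e he
    have h2 : e = ∅ := Finset.subset_empty.mp hsub
    rw [h2] at h1
    simp at h1
    omega
  have := Nat.sSup_mem ⟨0, h0⟩ (bddAbove_weakSet E)
  exact this

/-- Key counting lemma: any set `S` satisfies `|S| ≤ α + (#edges inside S)`. -/
lemma card_le_key (E : Finset (Finset V)) {k : ℕ} (hk : 2 ≤ k)
    (hunif : ∀ e ∈ E, e.card = k) (S : Finset V) :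
    S.card ≤ weakIndepNum E + (E.filter (fun e => e ⊆ S)).card := by
  classical
  set F := E.filter (fun e => e ⊆ S) with hF
  have hne : ∀ e ∈ F, e.Nonempty := by
    intro e he
    have heE : e ∈ E := (Finset.mem_filter.mp he).1
    have := hunif e heE
    exact Finset.card_pos.mp (by omega)
  choose g hg using hne
  set X : Finset V := F.attach.image (fun e => g e.1 e.2) with hX
  have hXcard : X.card ≤ F.card := (Finset.card_image_le).trans (by simp)
  have hW : WeakIndep E (S \ X) := by
    intro e heE hsub
    have heS : e ⊆ S := hsub.trans (Finset.sdiff_subset)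
    have heF : e ∈ F := Finset.mem_filter.mpr ⟨heE, heS⟩
    have h1 : g e heF ∈ e := hg e heF
    have h2 : g e heF ∈ X := Finset.mem_image.mpr ⟨⟨e, heF⟩, Finset.mem_attach _ _, rfl⟩
    exact (Finset.mem_sdiff.mp (hsub h1)).2 h2
  have h1 : (S \ X).card ≤ weakIndepNum E := le_weakIndepNum hW
  have h2 : S.card ≤ (S \ X).card + X.card := by
    have h3 := Finset.card_sdiff_add_card S X
    have h4 : S.card ≤ (S ∪ X).card := Finset.card_le_card Finset.subset_union_left
    omega
  omega

lemma aug_le (E : Finset (Finset V)) {k : ℕ} (hk : 2 ≤ k)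
    (hunif : ∀ e ∈ E, e.card = k) {s : ℕ} {S : Finset V} (h : AugIndep E s S) :
    s ≤ weakIndepNum E := by
  obtain ⟨r, hcard, hr, -, -⟩ := h
  have := card_le_key E hk hunif S
  omega

lemma exists_aug (E : Finset (Finset V)) {k : ℕ} (hk : 2 ≤ k)
    (hunif : ∀ e ∈ E, e.card = k) :
    ∃ S : Finset V, AugIndep E (weakIndepNum E) S := by
  classical
  set α := weakIndepNum E with hα
  set G : Finset (Finset V) := Finset.univ.filter (fun S =>
    (∀ e ∈ E, ∀ f ∈ E, e ⊆ S → f ⊆ S → e ≠ f → Disjoint e f) ∧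
    S.card = α + (E.filter (fun e => e ⊆ S)).card) with hG
  have hGmem : ∀ S : Finset V, S ∈ G ↔
      ((∀ e ∈ E, ∀ f ∈ E, e ⊆ S → f ⊆ S → e ≠ f → Disjoint e f) ∧
        S.card = α + (E.filter (fun e => e ⊆ S)).card) := by
    intro S; simp [hG]
  have hGne : G.Nonempty := by
    obtain ⟨W, hW, hWc⟩ := exists_max_weak E hk hunif
    have hfilt : E.filter (fun e => e ⊆ W) = ∅ := by
      apply Finset.filter_eq_empty_iff.mpr
      intro e he
      exact hW e he
    refine ⟨W, (hGmem W).mpr ⟨?_, ?_⟩⟩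
    · intro e he f hf heW _ _
      exact absurd heW (hW e he)
    · rw [hfilt]; simp [hWc, hα]
  obtain ⟨S, hSG, hSmax⟩ := G.exists_max_image Finset.card hGne
  obtain ⟨hdisj, hScard⟩ := (hGmem S).mp hSG
  set r := (E.filter (fun e => e ⊆ S)).card with hr
  refine ⟨S, r, hScard, rfl, hdisj, ?_⟩
  intro v hv
  by_contra hlt
  push_neg at hlt
  interval_cases hc : (E.filter (fun e => v ∈ e ∧ e ⊆ insert v S)).card
  · -- no edge through v inside insert v S : contradiction with card_le_key
    have hempty : E.filter (fun e => v ∈ e ∧ e ⊆ insert v S) = ∅ :=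
      Finset.card_eq_zero.mp hc
    have hnone : ∀ e ∈ E, ¬(v ∈ e ∧ e ⊆ insert v S) := by
      rw [Finset.filter_eq_empty_iff] at hempty
      exact hempty
    have hfeq : E.filter (fun e => e ⊆ insert v S) = E.filter (fun e => e ⊆ S) := by
      ext e
      simp only [Finset.mem_filter]
      constructor
      · rintro ⟨he, hsub⟩
        refine ⟨he, ?_⟩
        have hve : v ∉ e := fun hve => hnone e he ⟨hve, hsub⟩
        intro x hx
        rcases Finset.mem_insert.mp (hsub hx) with h | h
        · exact absurd (h ▸ hx) hve
        · exact h
      · rintro ⟨he, hsub⟩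
        exact ⟨he, hsub.trans (Finset.subset_insert v S)⟩
    have hkey := card_le_key E hk hunif (insert v S)
    rw [hfeq] at hkey
    rw [Finset.card_insert_of_notMem hv] at hkey
    omega
  · -- exactly one edge e0 through v
    obtain ⟨e0, he0⟩ := Finset.card_eq_one.mp hc
    have he0mem : e0 ∈ E ∧ v ∈ e0 ∧ e0 ⊆ insert v S := by
      have : e0 ∈ E.filter (fun e => v ∈ e ∧ e ⊆ insert v S) := by
        rw [he0]; exact Finset.mem_singleton_self e0
      simpa using this
    obtain ⟨he0E, hve0, he0sub⟩ := he0mem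
    have huniq : ∀ e ∈ E, v ∈ e → e ⊆ insert v S → e = e0 := by
      intro e he hve hsub
      have : e ∈ E.filter (fun e => v ∈ e ∧ e ⊆ insert v S) := by
        simp [he, hve, hsub]
      rw [he0] at this
      exact Finset.mem_singleton.mp this
    have he0notS : ¬ e0 ⊆ S := fun h => hv (h hve0)
    by_cases hA : ∀ f ∈ E, f ⊆ S → Disjoint e0 f
    · -- insert v S is a bigger good set: contradiction with maximality
      have hfeq : E.filter (fun e => e ⊆ insert v S)
          = insert e0 (E.filter (fun e => e ⊆ S)) := by
        ext e
        simp only [Finset.mem_filter, Finset.mem_insert]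
        constructor
        · rintro ⟨he, hsub⟩
          by_cases hve : v ∈ e
          · exact Or.inl (huniq e he hve hsub)
          · refine Or.inr ⟨he, ?_⟩
            intro x hx
            rcases Finset.mem_insert.mp (hsub hx) with h | h
            · exact absurd (h ▸ hx) hve
            · exact h
        · rintro (rfl | ⟨he, hsub⟩)
          · exact ⟨he0E, he0sub⟩
          · exact ⟨he, hsub.trans (Finset.subset_insert v S)⟩
      have he0nf : e0 ∉ E.filter (fun e => e ⊆ S) := by
        simp [he0notS]
      have hnewG : insert v S ∈ G := by
        refine (hGmem _).mpr ⟨?_, ?_⟩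
        · intro e he f hf hesub hfsub hef
          by_cases hve : v ∈ e
          · have he' : e = e0 := huniq e he hve hesub
            by_cases hvf : v ∈ f
            · exact absurd (he' ▸ (huniq f hf hvf hfsub).symm ▸ rfl : e = f) hef
            · have hfS : f ⊆ S := by
                intro x hx
                rcases Finset.mem_insert.mp (hfsub hx) with h | h
                · exact absurd (h ▸ hx) hvf
                · exact h
              exact he' ▸ hA f hf hfS
          · by_cases hvf : v ∈ f
            · have hf' : f = e0 := huniq f hf hvf hfsub
              have heS : e ⊆ S := by
                intro x hx
                rcases Finset.mem_insert.mp (hesub hx) with h | h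
                · exact absurd (h ▸ hx) hve
                · exact h
              exact (hf' ▸ (hA e he heS).symm)
            · have heS : e ⊆ S := by
                intro x hx
                rcases Finset.mem_insert.mp (hesub hx) with h | h
                · exact absurd (h ▸ hx) hve
                · exact h
              have hfS : f ⊆ S := by
                intro x hx
                rcases Finset.mem_insert.mp (hfsub hx) with h | h
                · exact absurd (h ▸ hx) hvf
                · exact h
              exact hdisj e he f hf heS hfS hef
        · rw [hfeq, Finset.card_insert_of_notMem he0nf,
            Finset.card_insert_of_notMem hv]
          omega
      have := hSmax _ hnewG
      rw [Finset.card_insert_of_notMem hv] at this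
      omega
    · -- e0 meets a matching edge f at x : swap x for v, contradiction with card_le_key
      push_neg at hA
      obtain ⟨f, hfE, hfS, hndisj⟩ := hA
      obtain ⟨x, hxe0, hxf⟩ := Finset.not_disjoint_iff.mp hndisj
      have hxS : x ∈ S := hfS hxf
      have hxv : x ≠ v := fun h => hv (h ▸ hxS)
      set S' := insert v (S.erase x) with hS'
      have hvS' : v ∉ S.erase x := fun h => hv (Finset.mem_of_mem_erase h)
      have hS'card : S'.card = S.card := by
        rw [hS', Finset.card_insert_of_notMem hvS', Finset.card_erase_of_mem hxS]
        have : 1 ≤ S.card := Finset.card_pos.mpr ⟨x, hxS⟩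
        omega
      have hfr : f ∈ E.filter (fun e => e ⊆ S) := Finset.mem_filter.mpr ⟨hfE, hfS⟩
      have hsub : E.filter (fun e => e ⊆ S')
          ⊆ (E.filter (fun e => e ⊆ S)).erase f := by
        intro e he
        obtain ⟨heE, hesub⟩ := Finset.mem_filter.mp he
        have hxnS' : x ∉ S' := by
          simp [hS', hxv, Finset.notMem_erase]
        have hve : v ∉ e := by
          intro hve
          have : e ⊆ insert v S := hesub.trans (Finset.insert_subset_insert _
            (Finset.erase_subset x S))
          have he0' : e = e0 := huniq e heE hve this
          exact hxnS' (hesub (he0' ▸ hxe0))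
        have heS : e ⊆ S.erase x := by
          intro y hy
          rcases Finset.mem_insert.mp (hesub hy) with h | h
          · exact absurd (h ▸ hy) hve
          · exact h
        have hef : e ≠ f := by
          intro h
          exact (Finset.notMem_erase x S) (heS (h ▸ hxf))
        exact Finset.mem_erase.mpr ⟨hef, Finset.mem_filter.mpr
          ⟨heE, heS.trans (Finset.erase_subset x S)⟩⟩
      have hcard' : (E.filter (fun e => e ⊆ S')).card ≤ r - 1 := by
        have h1 := Finset.card_le_card hsub
        rw [Finset.card_erase_of_mem hfr] at h1
        exact h1
      have hr1 : 1 ≤ r := Finset.card_pos.mpr ⟨f, hfr⟩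
      have hkey := card_le_key E hk hunif S'
      omega

end Aux

/-- For a `k`-uniform hypergraph `H` on a finite vertex set, `α(H) = s` iff `H` contains an
augmented independent set of order `s` but none of any larger order. -/
theorem stmt_6 {V : Type*} [Fintype V] [DecidableEq V] (k : ℕ) (hk : 2 ≤ k)
    (E : Finset (Finset V)) (hunif : ∀ e ∈ E, e.card = k) (s : ℕ) :
    weakIndepNum E = s ↔
      ((∃ S : Finset V, AugIndep E s S) ∧
        ∀ s' : ℕ, s < s' → ¬ ∃ S : Finset V, AugIndep E s' S) := by
  constructor
  · rintro rfl
    refine ⟨exists_aug E hk hunif, ?_⟩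
    rintro s' hs' ⟨S, hS⟩
    have := aug_le E hk hunif hS
    omega
  · rintro ⟨⟨S, hS⟩, hno⟩
    have h1 : s ≤ weakIndepNum E := aug_le E hk hunif hS
    by_contra hne
    have h2 : s < weakIndepNum E := lt_of_le_of_ne h1 (fun h => hne h.symm)
    exact hno _ h2 (exists_aug E hk hunif)
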